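/- Let K ∈ ℝ, N ∈ (1,∞), D > 0 (with D ≤ π√((N−1)/K) if K > 0). Then the function f_{K,N,D} is strictly increasing on the interval (0, D/2). -/

import Mathlib

open MeasureTheory Filter

noncomputable section

/-- The comparison function `s_κ(θ)`:
`sin(√κ·θ)/√κ` if `κ > 0`, `θ` if `κ = 0`, `sinh(√(−κ)·θ)/√(−κ)` if `κ < 0`. -/
def sK (κ θ : ℝ) : ℝ :=
  if 0 < κ then Real.sin (Real.sqrt κ * θ) / Real.sqrt κ
  else if κ = 0 then θ
  else Real.sinh (Real.sqrt (-κ) * θ) / Real.sqrt (-κ)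

/-- `h` is an `MCP(K,N)`-density on the interval `I ⊆ ℝ`: it is a nonnegative Borel
function satisfying
`h(t·x₁+(1−t)·x₀) ≥ (s_{K/(N−1)}((1−t)|x₁−x₀|)/s_{K/(N−1)}(|x₁−x₀|))^{N−1}·h(x₀)`
for all `x₀, x₁ ∈ I`, `t ∈ [0,1]`; when `x₀ = x₁` the coefficient is interpreted as `1−t`,
and when `K > 0` and `|x₁−x₀| ≥ π√((N−1)/K)` the coefficient is `+∞`, forcing `h x₀ = 0`. -/
def IsMCPDensity (K N : ℝ) (I : Set ℝ) (h : ℝ → ℝ) : Prop :=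
  Measurable h ∧ (∀ x ∈ I, 0 ≤ h x) ∧
  ∀ x₀ ∈ I, ∀ x₁ ∈ I, ∀ t ∈ Set.Icc (0:ℝ) 1,
    (x₀ = x₁ → (1 - t) * h x₀ ≤ h x₀) ∧
    (x₀ ≠ x₁ →
      ((0 < K ∧ Real.pi * Real.sqrt ((N - 1) / K) ≤ |x₁ - x₀|) → h x₀ = 0) ∧
      (¬(0 < K ∧ Real.pi * Real.sqrt ((N - 1) / K) ≤ |x₁ - x₀|) →
        (sK (K / (N - 1)) ((1 - t) * |x₁ - x₀|) / sK (K / (N - 1)) |x₁ - x₀|) ^ (N - 1) * h x₀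
          ≤ h (t * x₁ + (1 - t) * x₀)))

/-- `h` is a `CD(K,N)`-density on the interval `I ⊆ ℝ`. -/
def IsCDDensity (K N : ℝ) (I : Set ℝ) (h : ℝ → ℝ) : Prop :=
  (∀ x ∈ I, 0 ≤ h x) ∧
  ∀ x₀ ∈ I, ∀ x₁ ∈ I, x₀ < x₁ → ∀ t ∈ Set.Icc (0:ℝ) 1,
    (sK (K / (N - 1)) ((1 - t) * (x₁ - x₀)) / sK (K / (N - 1)) (x₁ - x₀)) * h x₀ ^ (1 / (N - 1))
      + (sK (K / (N - 1)) (t * (x₁ - x₀)) / sK (K / (N - 1)) (x₁ - x₀)) * h x₁ ^ (1 / (N - 1))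
      ≤ h ((1 - t) * x₀ + t * x₁) ^ (1 / (N - 1))

/-- The lower-bound function `f_{K,N,D}`. -/
def fKND (K N D : ℝ) (x : ℝ) : ℝ :=
  if x = 0 ∨ x = D then 0
  else ((∫ y in (0:ℝ)..x, (sK (K / (N - 1)) (D - y) / sK (K / (N - 1)) (D - x)) ^ (N - 1)) +
        (∫ y in x..D, (sK (K / (N - 1)) y / sK (K / (N - 1)) x) ^ (N - 1)))⁻¹

/-- The model density `h^a_{K,N,D}`. -/
def hKND (K N D a : ℝ) (x : ℝ) : ℝ :=
  if x ≤ a then fKND K N D a * (sK (K / (N - 1)) (D - x) / sK (K / (N - 1)) (D - a)) ^ (N - 1)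
  else fKND K N D a * (sK (K / (N - 1)) x / sK (K / (N - 1)) a) ^ (N - 1)

/-- `v_{K,N,D}(a) = ∫₀ᵃ h^a_{K,N,D}(x) dx`. -/
def vKND (K N D a : ℝ) : ℝ := ∫ x in (0:ℝ)..a, hKND K N D a x

/-- The (outer) Minkowski content of `A` with respect to `μ`:
`liminf_{ε→0⁺} (μ(Aᵉ) − μ(A))/ε` where `Aᵉ` is the open `ε`-neighbourhood of `A`. -/
def mink (μ : Measure ℝ) (A : Set ℝ) : ℝ :=
  Filter.liminf (fun ε : ℝ => ((μ (Metric.thickening ε A)).toReal - (μ A).toReal) / ε)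
    (nhdsWithin 0 (Set.Ioi 0))

/-- The measure `μ_h = h · Leb` restricted to `[0,D]`. -/
def muh (h : ℝ → ℝ) (D : ℝ) : Measure ℝ :=
  (volume.restrict (Set.Icc (0:ℝ) D)).withDensity (fun x => ENNReal.ofReal (h x))

/-- The restricted one-dimensional isoperimetric profile `Ĩ_{K,N,D}(v)` over
`MCP(K,N)`-densities on `[0,D]` integrating to `1`. -/
def Itilde (K N D v : ℝ) : ℝ :=
  sInf { p : ℝ | ∃ h : ℝ → ℝ, IsMCPDensity K N (Set.Icc 0 D) h ∧
    (∫ x in (0:ℝ)..D, h x) = 1 ∧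
    ∃ A : Set ℝ, MeasurableSet A ∧ A ⊆ Set.Icc 0 D ∧ (muh h D A).toReal = v ∧
      p = mink (muh h D) A }

/-- The restricted one-dimensional isoperimetric profile `Ĩ^{CD}_{K,N,D}(v)` over
`CD(K,N)`-densities on `[0,D]` integrating to `1`. -/
def ItildeCD (K N D v : ℝ) : ℝ :=
  sInf { p : ℝ | ∃ h : ℝ → ℝ, IsCDDensity K N (Set.Icc 0 D) h ∧
    (∫ x in (0:ℝ)..D, h x) = 1 ∧
    ∃ A : Set ℝ, MeasurableSet A ∧ A ⊆ Set.Icc 0 D ∧ (muh h D A).toReal = v ∧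
      p = mink (muh h D) A }


/-! ### Auxiliary lemmas for `fKND_strictMonoOn` -/

/-- The derivative of `sK κ`. -/
def cKaux (κ θ : ℝ) : ℝ :=
  if 0 < κ then Real.cos (Real.sqrt κ * θ)
  else if κ = 0 then 1
  else Real.cosh (Real.sqrt (-κ) * θ)

lemma sK_eq_pos {κ : ℝ} (h : 0 < κ) :
    sK κ = fun θ => Real.sin (Real.sqrt κ * θ) / Real.sqrt κ := by
  funext θ; simp only [sK]; rw [if_pos h]

lemma sK_eq_zero : sK 0 = fun θ : ℝ => θ := by
  funext θ; simp [sK]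

lemma sK_eq_neg {κ : ℝ} (h : κ < 0) :
    sK κ = fun θ => Real.sinh (Real.sqrt (-κ) * θ) / Real.sqrt (-κ) := by
  funext θ; simp only [sK]; rw [if_neg (not_lt.mpr h.le), if_neg h.ne]

lemma cKaux_eq_pos {κ : ℝ} (h : 0 < κ) :
    cKaux κ = fun θ => Real.cos (Real.sqrt κ * θ) := by
  funext θ; simp only [cKaux]; rw [if_pos h]

lemma cKaux_eq_zero : cKaux 0 = fun _ : ℝ => (1:ℝ) := by
  funext θ; simp [cKaux]

lemma cKaux_eq_neg {κ : ℝ} (h : κ < 0) :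
    cKaux κ = fun θ => Real.cosh (Real.sqrt (-κ) * θ) := by
  funext θ; simp only [cKaux]; rw [if_neg (not_lt.mpr h.le), if_neg h.ne]

lemma continuous_sK (κ : ℝ) : Continuous (sK κ) := by
  rcases lt_trichotomy 0 κ with hκ | hκ | hκ
  · rw [sK_eq_pos hκ]; fun_prop
  · rw [← hκ, sK_eq_zero]; fun_prop
  · rw [sK_eq_neg hκ]; fun_prop

lemma hasDerivAt_sK (κ θ : ℝ) : HasDerivAt (sK κ) (cKaux κ θ) θ := by
  have hid : ∀ c : ℝ, HasDerivAt (fun θ : ℝ => c * θ) c θ := fun c => by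
    simpa using (hasDerivAt_id θ).const_mul c
  rcases lt_trichotomy 0 κ with hκ | hκ | hκ
  · have hs : Real.sqrt κ ≠ 0 := (Real.sqrt_pos.mpr hκ).ne'
    have h := ((hid (Real.sqrt κ)).sin).div_const (Real.sqrt κ)
    rw [sK_eq_pos hκ, cKaux_eq_pos hκ]
    refine h.congr_deriv (Eq.symm ?_)
    field_simp
  · rw [← hκ, sK_eq_zero, cKaux_eq_zero]
    exact hasDerivAt_id θ
  · have hs : Real.sqrt (-κ) ≠ 0 := (Real.sqrt_pos.mpr (by linarith)).ne'
    have h := ((hid (Real.sqrt (-κ))).sinh).div_const (Real.sqrt (-κ))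
    rw [sK_eq_neg hκ, cKaux_eq_neg hκ]
    refine h.congr_deriv (Eq.symm ?_)
    field_simp

lemma hasDerivAt_cKaux (κ θ : ℝ) : HasDerivAt (cKaux κ) (-κ * sK κ θ) θ := by
  have hid : ∀ c : ℝ, HasDerivAt (fun θ : ℝ => c * θ) c θ := fun c => by
    simpa using (hasDerivAt_id θ).const_mul c
  rcases lt_trichotomy 0 κ with hκ | hκ | hκ
  · have hs : Real.sqrt κ ≠ 0 := (Real.sqrt_pos.mpr hκ).ne'
    have hsq : Real.sqrt κ * Real.sqrt κ = κ := Real.mul_self_sqrt hκ.le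
    have h := (hid (Real.sqrt κ)).cos
    rw [sK_eq_pos hκ, cKaux_eq_pos hκ]
    refine h.congr_deriv (Eq.symm ?_)
    field_simp
    linear_combination (Real.sin (Real.sqrt κ * θ)) * hsq
  · rw [← hκ, sK_eq_zero, cKaux_eq_zero]
    simpa using hasDerivAt_const θ (1 : ℝ)
  · have hs : Real.sqrt (-κ) ≠ 0 := (Real.sqrt_pos.mpr (by linarith)).ne'
    have hsq : Real.sqrt (-κ) * Real.sqrt (-κ) = -κ := Real.mul_self_sqrt (by linarith)
    have h := (hid (Real.sqrt (-κ))).cosh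
    rw [sK_eq_neg hκ, cKaux_eq_neg hκ]
    refine h.congr_deriv (Eq.symm ?_)
    field_simp
    linear_combination (-Real.sinh (Real.sqrt (-κ) * θ)) * hsq

lemma cKaux_sq (κ θ : ℝ) : cKaux κ θ ^ 2 + κ * sK κ θ ^ 2 = 1 := by
  rcases lt_trichotomy 0 κ with hκ | hκ | hκ
  · have hsq : Real.sqrt κ ^ 2 = κ := Real.sq_sqrt hκ.le
    rw [sK_eq_pos hκ, cKaux_eq_pos hκ]
    simp only
    rw [div_pow, hsq, mul_div_cancel₀ _ hκ.ne']
    exact Real.cos_sq_add_sin_sq _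
  · rw [← hκ, sK_eq_zero, cKaux_eq_zero]; simp
  · have hκ3 : (0:ℝ) < -κ := by linarith
    have hsq : Real.sqrt (-κ) ^ 2 = -κ := Real.sq_sqrt hκ3.le
    rw [sK_eq_neg hκ, cKaux_eq_neg hκ]
    simp only
    rw [div_pow, hsq]
    have h := Real.cosh_sq_sub_sinh_sq (Real.sqrt (-κ) * θ)
    field_simp
    rw [mul_div_cancel_left₀ _ hκ.ne]
    nlinarith [h]

lemma sK_pos {κ θ : ℝ} (hθ : 0 < θ) (hub : 0 < κ → Real.sqrt κ * θ < Real.pi) :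
    0 < sK κ θ := by
  rcases lt_trichotomy 0 κ with hκ | hκ | hκ
  · have hs : 0 < Real.sqrt κ := Real.sqrt_pos.mpr hκ
    rw [sK_eq_pos hκ]
    exact div_pos (Real.sin_pos_of_pos_of_lt_pi (by positivity) (hub hκ)) hs
  · rw [← hκ, sK_eq_zero]; exact hθ
  · have hs : 0 < Real.sqrt (-κ) := Real.sqrt_pos.mpr (by linarith)
    rw [sK_eq_neg hκ]
    exact div_pos (Real.sinh_pos_iff.mpr (by positivity)) hs

lemma sK_nonneg {κ θ : ℝ} (hθ : 0 ≤ θ) (hub : 0 < κ → Real.sqrt κ * θ ≤ Real.pi) :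
    0 ≤ sK κ θ := by
  rcases lt_trichotomy 0 κ with hκ | hκ | hκ
  · have hs : 0 < Real.sqrt κ := Real.sqrt_pos.mpr hκ
    rw [sK_eq_pos hκ]
    exact div_nonneg (Real.sin_nonneg_of_nonneg_of_le_pi (by positivity) (hub hκ)) hs.le
  · rw [← hκ, sK_eq_zero]; exact hθ
  · have hs : 0 < Real.sqrt (-κ) := Real.sqrt_pos.mpr (by linarith)
    rw [sK_eq_neg hκ]
    exact div_nonneg (Real.sinh_nonneg_iff.mpr (by positivity)) hs.le

lemma cKaux_pos {κ θ : ℝ} (hθ : 0 ≤ θ) (hub : 0 < κ → Real.sqrt κ * θ < Real.pi / 2) :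
    0 < cKaux κ θ := by
  rcases lt_trichotomy 0 κ with hκ | hκ | hκ
  · rw [cKaux_eq_pos hκ]
    refine Real.cos_pos_of_mem_Ioo ⟨?_, hub hκ⟩
    have h1 : (0:ℝ) < Real.pi / 2 := by positivity
    have h0 : 0 ≤ Real.sqrt κ * θ := by positivity
    linarith
  · rw [← hκ, cKaux_eq_zero]; norm_num
  · rw [cKaux_eq_neg hκ]
    exact Real.cosh_pos _

/-- Proposition (Lower bound), point (i): `f_{K,N,D}` is strictly increasing on `(0, D/2)`. -/
theorem fKND_strictMonoOn (K N D : ℝ) (hN : 1 < N) (hD : 0 < D)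
    (hDK : 0 < K → D ≤ Real.pi * Real.sqrt ((N - 1) / K)) :
    StrictMonoOn (fKND K N D) (Set.Ioo 0 (D / 2)) := by
  have hN1 : (0:ℝ) < N - 1 := by linarith
  obtain ⟨κ, hκdef⟩ : ∃ κ : ℝ, κ = K / (N - 1) := ⟨_, rfl⟩
  -- the bound `√κ * D ≤ π`
  have hubD : 0 < κ → Real.sqrt κ * D ≤ Real.pi := by
    intro hκ
    have hK : 0 < K := by
      by_contra hK
      push_neg at hK
      have : κ ≤ 0 := by
        rw [hκdef]; exact div_nonpos_of_nonpos_of_nonneg hK hN1.le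
      linarith
    have h1 := hDK hK
    have h2 : (N - 1) / K = κ⁻¹ := by rw [hκdef, inv_div]
    rw [h2, Real.sqrt_inv] at h1
    have hs : 0 < Real.sqrt κ := Real.sqrt_pos.mpr hκ
    calc Real.sqrt κ * D ≤ Real.sqrt κ * (Real.pi * (Real.sqrt κ)⁻¹) := by nlinarith
      _ = Real.pi := by field_simp
  have hsposD : ∀ θ : ℝ, 0 < θ → θ < D → 0 < sK κ θ := by
    intro θ h1 h2
    refine sK_pos h1 (fun hκ => ?_)
    have hs : 0 < Real.sqrt κ := Real.sqrt_pos.mpr hκ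
    have := hubD hκ
    nlinarith
  have hsnnD : ∀ θ : ℝ, 0 ≤ θ → θ ≤ D → 0 ≤ sK κ θ := by
    intro θ h1 h2
    refine sK_nonneg h1 (fun hκ => ?_)
    have hs : 0 < Real.sqrt κ := Real.sqrt_pos.mpr hκ
    have := hubD hκ
    nlinarith
  have hcposD : ∀ θ : ℝ, 0 ≤ θ → θ < D / 2 → 0 < cKaux κ θ := by
    intro θ h1 h2
    refine cKaux_pos h1 (fun hκ => ?_)
    have hs : 0 < Real.sqrt κ := Real.sqrt_pos.mpr hκ
    have := hubD hκ
    nlinarith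
  -- the profile `S`, the tail integral `G`, the ratio `ct = c/s^N`, and `P = G/S`
  obtain ⟨S, hS_def⟩ : ∃ S : ℝ → ℝ, S = fun θ => sK κ θ ^ (N - 1) := ⟨_, rfl⟩
  have hScont : Continuous S := by
    rw [hS_def]
    exact (continuous_sK κ).rpow_const (fun x => Or.inr (by linarith))
  have hSint : ∀ a b : ℝ, IntervalIntegrable S MeasureTheory.volume a b :=
    fun a b => hScont.intervalIntegrable a b
  have hSval : ∀ θ : ℝ, S θ = sK κ θ ^ (N - 1) := fun θ => by rw [hS_def]
  have hSpos : ∀ θ : ℝ, 0 < θ → θ < D → 0 < S θ := by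
    intro θ h1 h2
    rw [hSval]
    exact Real.rpow_pos_of_pos (hsposD θ h1 h2) _
  have hSnn : ∀ θ : ℝ, 0 ≤ θ → θ ≤ D → 0 ≤ S θ := by
    intro θ h1 h2
    rw [hSval]
    exact Real.rpow_nonneg (hsnnD θ h1 h2) _
  obtain ⟨G, hG_def⟩ : ∃ G : ℝ → ℝ, G = fun a => ∫ y in a..D, S y := ⟨_, rfl⟩
  have hGval : ∀ a : ℝ, G a = ∫ y in a..D, S y := fun a => by rw [hG_def]
  have hG' : ∀ a : ℝ, HasDerivAt G (-(S a)) a := by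
    intro a
    rw [hG_def]
    exact intervalIntegral.integral_hasDerivAt_left (hSint a D)
      (hScont.stronglyMeasurableAtFilter _ _) hScont.continuousAt
  have hGpos : ∀ a : ℝ, 0 < a → a < D → 0 < G a := by
    intro a h1 h2
    rw [hGval]
    exact intervalIntegral.intervalIntegral_pos_of_pos_on (hSint a D)
      (fun x hx => hSpos x (h1.trans hx.1) hx.2) h2
  have hGnn : ∀ a : ℝ, 0 ≤ a → a ≤ D → 0 ≤ G a := by
    intro a h1 h2
    rw [hGval]
    exact intervalIntegral.integral_nonneg h2 (fun u hu => hSnn u (h1.trans hu.1) hu.2)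
  obtain ⟨ct, hct_def⟩ : ∃ ct : ℝ → ℝ, ct = fun θ => cKaux κ θ / sK κ θ ^ N := ⟨_, rfl⟩
  have hctval : ∀ θ : ℝ, ct θ = cKaux κ θ / sK κ θ ^ N := fun θ => by rw [hct_def]
  have hct' : ∀ θ ∈ Set.Ioo (0:ℝ) D, HasDerivAt ct
      (-(sK κ θ ^ (N - 1) * (1 + (N - 1) * cKaux κ θ ^ 2)) / (sK κ θ ^ N) ^ 2) θ := by
    intro θ hθ
    have hsp : 0 < sK κ θ := hsposD θ hθ.1 hθ.2
    have hden : HasDerivAt (fun θ => sK κ θ ^ N) (N * sK κ θ ^ (N - 1) * cKaux κ θ) θ := by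
      have h := (Real.hasDerivAt_rpow_const (x := sK κ θ) (p := N)
        (Or.inl hsp.ne')).comp θ (hasDerivAt_sK κ θ)
      exact h
    rw [hct_def]
    have h := (hasDerivAt_cKaux κ θ).div hden (by positivity)
    refine h.congr_deriv (Eq.symm ?_)
    congr 1
    have hsplit : sK κ θ ^ N = sK κ θ ^ (N - 1) * sK κ θ := by
      rw [← Real.rpow_add_one hsp.ne' (N - 1)]
      ring_nf
    have hk : κ * sK κ θ ^ 2 = 1 - cKaux κ θ ^ 2 := by linarith [cKaux_sq κ θ]
    rw [hsplit]
    linear_combination (sK κ θ ^ (N - 1)) * hk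
  have hctanti : StrictAntiOn ct (Set.Ioo 0 D) := by
    refine strictAntiOn_of_deriv_neg (convex_Ioo 0 D)
      (fun θ hθ => ((hct' θ hθ).continuousAt).continuousWithinAt) ?_
    intro θ hθ
    rw [interior_Ioo] at hθ
    rw [(hct' θ hθ).deriv]
    have hsp : 0 < sK κ θ := hsposD θ hθ.1 hθ.2
    have h1 : 0 < sK κ θ ^ (N - 1) := Real.rpow_pos_of_pos hsp _
    have h2 : 0 < (sK κ θ ^ N) ^ 2 := by positivity
    have h3 : 0 < 1 + (N - 1) * cKaux κ θ ^ 2 := by nlinarith [sq_nonneg (cKaux κ θ)]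
    exact div_neg_of_neg_of_pos (by nlinarith) h2
  obtain ⟨P, hP_def⟩ : ∃ P : ℝ → ℝ, P = fun a => G a / S a := ⟨_, rfl⟩
  have hPval : ∀ a : ℝ, P a = G a / S a := fun a => by rw [hP_def]
  have hP' : ∀ a ∈ Set.Ioo (0:ℝ) D, HasDerivAt P (-1 - (N - 1) * ct a * G a) a := by
    intro a ha
    have hsp : 0 < sK κ a := hsposD a ha.1 ha.2
    have hSp : 0 < S a := hSpos a ha.1 ha.2
    have hS' : HasDerivAt S ((N - 1) * sK κ a ^ (N - 2) * cKaux κ a) a := by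
      rw [hS_def]
      have h := (Real.hasDerivAt_rpow_const (x := sK κ a) (p := N - 1)
        (Or.inl hsp.ne')).comp a (hasDerivAt_sK κ a)
      rw [show N - 1 - (1:ℝ) = N - 2 by ring] at h
      exact h
    rw [hP_def]
    have h := (hG' a).div hS' hSp.ne'
    refine h.congr_deriv (Eq.symm ?_)
    have hSN : (0:ℝ) < sK κ a ^ N := Real.rpow_pos_of_pos hsp _
    have e1 : sK κ a ^ (N - 2) * sK κ a ^ N = sK κ a ^ (N - 1) * sK κ a ^ (N - 1) := by
      rw [← Real.rpow_add hsp, ← Real.rpow_add hsp]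
      ring_nf
    rw [hctval, hSval a]
    rw [eq_div_iff (ne_of_gt (by positivity : (0:ℝ) < (sK κ a ^ (N - 1)) ^ 2))]
    have e2 : cKaux κ a / sK κ a ^ N * (sK κ a ^ (N - 1)) ^ 2 = cKaux κ a * sK κ a ^ (N - 2) := by
      rw [sq, ← e1]
      field_simp
    calc (-1 - (N - 1) * (cKaux κ a / sK κ a ^ N) * G a) * (sK κ a ^ (N - 1)) ^ 2
        = -(sK κ a ^ (N - 1)) ^ 2
          - (N - 1) * G a * (cKaux κ a / sK κ a ^ N * (sK κ a ^ (N - 1)) ^ 2) := by ring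
      _ = -(sK κ a ^ (N - 1)) ^ 2 - (N - 1) * G a * (cKaux κ a * sK κ a ^ (N - 2)) := by rw [e2]
      _ = -(sK κ a ^ (N - 1)) * sK κ a ^ (N - 1)
          - G a * ((N - 1) * sK κ a ^ (N - 2) * cKaux κ a) := by ring
  obtain ⟨g, hg_def⟩ : ∃ g : ℝ → ℝ, g = fun x => P (D - x) + P x := ⟨_, rfl⟩
  have hgval : ∀ x : ℝ, g x = P (D - x) + P x := fun x => by rw [hg_def]
  have hmemD : ∀ x ∈ Set.Ioo (0:ℝ) (D / 2),
      x ∈ Set.Ioo (0:ℝ) D ∧ (D - x) ∈ Set.Ioo (0:ℝ) D ∧ x < D - x := by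
    intro x hx
    obtain ⟨h1, h2⟩ := hx
    exact ⟨⟨h1, by linarith⟩, ⟨by linarith, by linarith⟩, by linarith⟩
  have hg' : ∀ x ∈ Set.Ioo (0:ℝ) (D / 2),
      HasDerivAt g ((N - 1) * (ct (D - x) * G (D - x) - ct x * G x)) x := by
    intro x hx
    obtain ⟨hx1, hx2, hx3⟩ := hmemD x hx
    have h1 : HasDerivAt (fun y : ℝ => P (D - y))
        ((-1 - (N - 1) * ct (D - x) * G (D - x)) * (-1)) x :=
      (hP' (D - x) hx2).comp x ((hasDerivAt_id x).const_sub D)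
    have h2 := hP' x hx1
    have h3 := h1.add h2
    rw [hg_def]
    refine h3.congr_deriv (Eq.symm ?_)
    ring
  have hganti : StrictAntiOn g (Set.Ioo 0 (D / 2)) := by
    refine strictAntiOn_of_deriv_neg (convex_Ioo 0 (D / 2))
      (fun x hx => ((hg' x hx).continuousAt).continuousWithinAt) ?_
    intro x hx
    rw [interior_Ioo] at hx
    rw [(hg' x hx).deriv]
    obtain ⟨hx1, hx2, hx3⟩ := hmemD x hx
    have hctx : 0 < ct x := by
      rw [hctval]
      exact div_pos (hcposD x hx1.1.le hx.2) (Real.rpow_pos_of_pos (hsposD x hx1.1 hx1.2) _)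
    have hctlt : ct (D - x) < ct x := hctanti hx1 hx2 hx3
    have hGnn' : 0 ≤ G (D - x) := hGnn _ hx2.1.le hx2.2.le
    have hGdiff : G (D - x) < G x := by
      have hsplit : (∫ y in x..(D - x), S y) + G (D - x) = G x := by
        rw [hGval, hGval]
        exact intervalIntegral.integral_add_adjacent_intervals (hSint x (D - x)) (hSint (D - x) D)
      have hpos : 0 < ∫ y in x..(D - x), S y :=
        intervalIntegral.intervalIntegral_pos_of_pos_on (hSint x (D - x))
          (fun t ht => hSpos t (hx1.1.trans ht.1) (ht.2.trans hx2.2)) hx3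
      linarith
    have hneg : ct (D - x) * G (D - x) - ct x * G x < 0 := by nlinarith
    exact mul_neg_of_pos_of_neg hN1 hneg
  have hgpos : ∀ x ∈ Set.Ioo (0:ℝ) (D / 2), 0 < g x := by
    intro x hx
    obtain ⟨hx1, hx2, hx3⟩ := hmemD x hx
    have p1 : 0 < P x := by
      rw [hPval]; exact div_pos (hGpos x hx1.1 hx1.2) (hSpos x hx1.1 hx1.2)
    have p2 : 0 < P (D - x) := by
      rw [hPval]; exact div_pos (hGpos _ hx2.1 hx2.2) (hSpos _ hx2.1 hx2.2)
    rw [hgval]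
    exact add_pos p2 p1
  have hfval : ∀ x ∈ Set.Ioo (0:ℝ) (D / 2), fKND K N D x = (g x)⁻¹ := by
    intro x hx
    obtain ⟨hx1, hx2, hx3⟩ := hmemD x hx
    have hne : ¬ (x = 0 ∨ x = D) := by push_neg; exact ⟨hx1.1.ne', hx1.2.ne⟩
    rw [fKND, if_neg hne, ← hκdef]
    have hA : (∫ y in (0:ℝ)..x, (sK κ (D - y) / sK κ (D - x)) ^ (N - 1)) = P (D - x) := by
      have h1 : Set.EqOn (fun y => (sK κ (D - y) / sK κ (D - x)) ^ (N - 1))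
          (fun y => S (D - y) / S (D - x)) (Set.uIcc (0:ℝ) x) := by
        intro y hy
        rw [Set.uIcc_of_le hx1.1.le] at hy
        simp only
        rw [Real.div_rpow (hsnnD _ (by linarith [hy.2, hx1.2]) (by linarith [hy.1]))
          (hsnnD _ hx2.1.le hx2.2.le), hSval, hSval]
      rw [intervalIntegral.integral_congr h1]
      rw [intervalIntegral.integral_div]
      have h2 : (∫ y in (0:ℝ)..x, S (D - y)) = G (D - x) := by
        rw [intervalIntegral.integral_comp_sub_left S D, sub_zero, hGval]
      rw [h2, hPval]
    have hB : (∫ y in x..D, (sK κ y / sK κ x) ^ (N - 1)) = P x := by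
      have h1 : Set.EqOn (fun y => (sK κ y / sK κ x) ^ (N - 1))
          (fun y => S y / S x) (Set.uIcc x D) := by
        intro y hy
        rw [Set.uIcc_of_le hx1.2.le] at hy
        simp only
        rw [Real.div_rpow (hsnnD _ (hx1.1.le.trans hy.1) hy.2)
          (hsnnD _ hx1.1.le hx1.2.le), hSval, hSval]
      rw [intervalIntegral.integral_congr h1]
      rw [intervalIntegral.integral_div]
      rw [hPval, hGval]
    rw [hA, hB, hgval]
  intro x₁ hx₁ x₂ hx₂ h12
  rw [hfval x₁ hx₁, hfval x₂ hx₂]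
  have h1 : 0 < g x₂ := hgpos x₂ hx₂
  have h2 : g x₂ < g x₁ := hganti hx₁ hx₂ h12
  exact inv_strictAnti₀ h1 h2


end
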